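/- Let A be a complete Boolean algebra that does not satisfy the countable chain condition, i.e., A contains an uncountable family of pairwise disjoint nonzero elements. Then the power set algebra 𝒫(ω₁) is an order retract of A: there exist an order embedding e : 𝒫(ω₁) → A (for all x, y ⊆ ω₁, x ⊆ y if and only if e(x) ≤ e(y)) and an order preserving map f : A → 𝒫(ω₁) with f ∘ e = id. -/

import Mathlib

open Set Cardinal

universe v u

theorem aux_retract {A : Type u} [CompleteBooleanAlgebra A] (D : Set A)
    (hD : ¬ D.Countable) (hD0 : ∀ a ∈ D, a ≠ ⊥)
    (hDdisj : ∀ a ∈ D, ∀ b ∈ D, a ≠ b → a ⊓ b = ⊥) :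
    ∃ (e : Set {α : Ordinal.{v} // α < (Cardinal.aleph.{v} 1).ord} → A)
      (f : A → Set {α : Ordinal.{v} // α < (Cardinal.aleph.{v} 1).ord}),
      (∀ x y : Set {α : Ordinal.{v} // α < (Cardinal.aleph.{v} 1).ord}, x ⊆ y ↔ e x ≤ e y) ∧
      Monotone f ∧ ∀ x, f (e x) = x := by
  have h1 : (Cardinal.aleph.{u} 1) ≤ #D := by
    rw [countable_iff_lt_aleph_one] at hD
    exact le_of_not_gt hD
  have hcard : #{α : Ordinal.{v} // α < (Cardinal.aleph.{v} 1).ord}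
      = Cardinal.lift.{v+1} (Cardinal.aleph.{v} 1) := by
    have h := Ordinal.mk_Iio_ordinal (Cardinal.aleph.{v} 1).ord
    rw [Cardinal.card_ord] at h
    exact h
  have hle : Cardinal.lift.{u} #{α : Ordinal.{v} // α < (Cardinal.aleph.{v} 1).ord}
      ≤ Cardinal.lift.{v+1} #D := by
    rw [hcard, Cardinal.lift_lift]
    have h2 := Cardinal.lift_le.{v+1}.mpr h1
    simpa [Cardinal.lift_aleph, Ordinal.lift_one] using h2
  obtain ⟨g⟩ := Cardinal.lift_mk_le'.mp hle
  -- g : Ω ↪ ↥D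
  have key : ∀ (i : {α : Ordinal.{v} // α < (Cardinal.aleph.{v} 1).ord})
      (y : Set {α : Ordinal.{v} // α < (Cardinal.aleph.{v} 1).ord}),
      (g i : A) ≤ ⨆ j ∈ y, (g j : A) → i ∈ y := by
    intro i y h
    by_contra hi
    have hbot : (g i : A) = ⊥ := by
      have h1 : (g i : A) = (g i : A) ⊓ ⨆ j ∈ y, (g j : A) := (inf_eq_left.mpr h).symm
      rw [h1, inf_iSup_eq]
      simp only [iSup_eq_bot]
      intro j
      rw [inf_iSup_eq]
      simp only [iSup_eq_bot]
      intro hj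
      apply hDdisj _ (g i).2 _ (g j).2
      intro hgij
      exact hi (by rwa [← g.injective (Subtype.ext hgij)] at hj)
    exact hD0 _ (g i).2 hbot
  refine ⟨fun x => ⨆ i ∈ x, (g i : A), fun a => {i | (g i : A) ≤ a}, ?_, ?_, ?_⟩
  · intro x y
    constructor
    · intro hxy
      exact iSup_le fun i => iSup_le fun hi => le_iSup₂ (f := fun i _ => (g i : A)) i (hxy hi)
    · intro h i hi
      exact key i y (le_trans (le_iSup₂ (f := fun i _ => (g i : A)) i hi) h)
  · intro a b hab i hi
    exact le_trans hi hab
  · intro x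
    ext i
    simp only [Set.mem_setOf_eq]
    exact ⟨key i x, fun hi => le_iSup₂ (f := fun i _ => (g i : A)) i hi⟩

/-- If a complete Boolean algebra `A` fails the countable chain condition, then
`𝒫(ω₁)` is an order retract of `A`. -/
theorem power_omega1_retract_of_non_ccc_complete_boolean_algebra
    {A : Type*} [CompleteBooleanAlgebra A] (D : Set A)
    (hD : ¬ D.Countable) (hD0 : ∀ a ∈ D, a ≠ ⊥)
    (hDdisj : ∀ a ∈ D, ∀ b ∈ D, a ≠ b → a ⊓ b = ⊥) :
    ∃ (e : Set {α : Ordinal // α < (Cardinal.aleph 1).ord} → A)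
      (f : A → Set {α : Ordinal // α < (Cardinal.aleph 1).ord}),
      (∀ x y : Set {α : Ordinal // α < (Cardinal.aleph 1).ord}, x ⊆ y ↔ e x ≤ e y) ∧
      Monotone f ∧ ∀ x, f (e x) = x := by
  exact aux_retract D hD hD0 hDdisj
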